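/- Suppose f : ℝ^d → ℝⁿ satisfies limsup_{h→0} |f(x+h) - Q(h)|/|h|^k < ∞ for some x and some polynomial Q of degree ≤ k-1, and g : ℝⁿ → ℝᵐ satisfies limsup_{h→0} |g(y+h) - P(h)|/|h|^k < ∞ for y = f(x) and some polynomial P of degree ≤ k-1. Then limsup_{h→0} |(g∘f)(x+h) - T(h)|/|h|^k < ∞, where T is the Taylor polynomial of order k-1 of P ∘ Q. -/

import Mathlib

open MeasureTheory Asymptotics Filter

noncomputable def polyEval {n m : ℕ} (P : Fin m → MvPolynomial (Fin n) ℝ)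
    (x : Fin n → ℝ) : Fin m → ℝ :=
  fun i => MvPolynomial.eval x (P i)

open MvPolynomial in
lemma contDiff_mvPolyEval {d : ℕ} (p : MvPolynomial (Fin d) ℝ) :
    ContDiff ℝ 1 (fun x : Fin d → ℝ => eval x p) := by
  induction p using MvPolynomial.induction_on with
  | C a => simp only [eval_C]; exact contDiff_const
  | add p q hp hq => simp only [map_add]; exact hp.add hq
  | mul_X p i hp =>
    simp only [map_mul, eval_X]
    exact hp.mul (ContinuousLinearMap.proj i : (Fin d → ℝ) →L[ℝ] ℝ).contDiff

open MvPolynomial in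
lemma eval_isBigO_of_support {d k : ℕ} (p : MvPolynomial (Fin d) ℝ)
    (hp : ∀ a ∈ p.support, k ≤ a.sum fun _ e => e) :
    (fun h : Fin d → ℝ => eval h p) =O[nhds 0] fun h => ‖h‖ ^ k := by
  rw [Asymptotics.isBigO_iff]
  refine ⟨∑ a ∈ p.support, |coeff a p|, ?_⟩
  filter_upwards [Metric.closedBall_mem_nhds (0 : Fin d → ℝ) one_pos] with h hh
  rw [Metric.mem_closedBall, dist_zero_right] at hh
  have hnn : (0 : ℝ) ≤ ‖h‖ := norm_nonneg h
  have hrhs : ‖‖h‖ ^ k‖ = ‖h‖ ^ k := by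
    rw [Real.norm_eq_abs, abs_of_nonneg (pow_nonneg hnn k)]
  rw [eval_eq, hrhs]
  calc ‖∑ a ∈ p.support, coeff a p * ∏ i ∈ a.support, h i ^ a i‖
      ≤ ∑ a ∈ p.support, ‖coeff a p * ∏ i ∈ a.support, h i ^ a i‖ := norm_sum_le _ _
    _ ≤ ∑ a ∈ p.support, |coeff a p| * ‖h‖ ^ k := by
        refine Finset.sum_le_sum fun a ha => ?_
        rw [norm_mul, Real.norm_eq_abs]
        refine mul_le_mul_of_nonneg_left ?_ (abs_nonneg _)
        calc ‖∏ i ∈ a.support, h i ^ a i‖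
            = ∏ i ∈ a.support, ‖h i‖ ^ a i := by
              rw [norm_prod]; exact Finset.prod_congr rfl fun i _ => norm_pow _ _
          _ ≤ ∏ i ∈ a.support, ‖h‖ ^ a i := by
              refine Finset.prod_le_prod (fun i _ => by positivity) fun i _ => ?_
              exact pow_le_pow_left₀ (norm_nonneg _) (norm_le_pi_norm h i) _
          _ = ‖h‖ ^ ∑ i ∈ a.support, a i := Finset.prod_pow_eq_pow_sum _ _ _
          _ ≤ ‖h‖ ^ k := pow_le_pow_of_le_one hnn hh (hp a ha)
    _ = (∑ a ∈ p.support, |coeff a p|) * ‖h‖ ^ k := by rw [Finset.sum_mul]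

theorem composition_has_bigO_expansion
    (d n m k : ℕ) (hk : 1 ≤ k)
    (f : (Fin d → ℝ) → (Fin n → ℝ)) (g : (Fin n → ℝ) → (Fin m → ℝ))
    (x : Fin d → ℝ)
    (Q : Fin n → MvPolynomial (Fin d) ℝ) (hQdeg : ∀ i, (Q i).totalDegree ≤ k - 1)
    (hQ : (fun h => f (x + h) - polyEval Q h) =O[nhds 0] fun h => ‖h‖ ^ k)
    (P : Fin m → MvPolynomial (Fin n) ℝ) (hPdeg : ∀ i, (P i).totalDegree ≤ k - 1)
    (hP : (fun h => g (f x + h) - polyEval P h) =O[nhds 0] fun h => ‖h‖ ^ k) :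
    -- `T` is the Taylor polynomial of order `k-1` of `u ↦ P (Q (u) - f x)`
    -- (the composition `P ∘ Q` in coordinates centered at `x` and `y = f x`).
    (fun h => (g ∘ f) (x + h) -
        polyEval (fun i => ∑ j ∈ Finset.range k,
          MvPolynomial.homogeneousComponent j
            ((MvPolynomial.aeval fun l => Q l - MvPolynomial.C (f x l)) (P i))) h)
      =O[nhds 0] fun h => ‖h‖ ^ k := by
  classical
  set Qt : Fin n → MvPolynomial (Fin d) ℝ := fun l => Q l - MvPolynomial.C (f x l) with hQt
  set S : Fin m → MvPolynomial (Fin d) ℝ := fun i => (MvPolynomial.aeval Qt) (P i) with hS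
  set Tp : Fin m → MvPolynomial (Fin d) ℝ :=
    fun i => ∑ j ∈ Finset.range k, MvPolynomial.homogeneousComponent j (S i) with hTp
  -- `f x = polyEval Q 0`
  have hfx : f x = polyEval Q 0 := by
    obtain ⟨c, hc⟩ := hQ.isBigOWith
    have h0 := hc.bound.self_of_nhds
    simp only [add_zero, norm_zero, zero_pow (by omega : k ≠ 0), mul_zero] at h0
    exact sub_eq_zero.mp (norm_le_zero_iff.mp h0)
  have hq0 : ∀ l, MvPolynomial.coeff 0 (Qt l) = 0 := by
    intro l
    have h1 : MvPolynomial.coeff 0 (Q l) = f x l := by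
      have : f x l = MvPolynomial.eval (0 : Fin d → ℝ) (Q l) := by
        rw [hfx]; rfl
      rw [this, MvPolynomial.eval_zero, MvPolynomial.constantCoeff_eq]
    simp [hQt, MvPolynomial.coeff_sub, h1]
  set q : (Fin d → ℝ) → (Fin n → ℝ) := fun h => polyEval Qt h with hq
  have hq_eq : ∀ h, q h = polyEval Q h - f x := by
    intro h; funext l
    simp [hq, hQt, polyEval, MvPolynomial.eval_C]
  have hq1 : q =O[nhds 0] fun h => ‖h‖ := by
    rw [isBigO_pi]
    intro l
    have hsup : ∀ a ∈ (Qt l).support, 1 ≤ a.sum fun _ e => e := by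
      intro a ha
      by_contra hlt
      have hz : (a.sum fun _ e => e) = 0 := by omega
      have ha0 : a = 0 := by
        ext i
        by_contra hi
        have : i ∈ a.support := Finsupp.mem_support_iff.mpr hi
        have := Finset.sum_eq_zero_iff.mp hz i this
        exact hi this
      rw [ha0] at ha
      exact MvPolynomial.mem_support_iff.mp ha (hq0 l)
    have := eval_isBigO_of_support (k := 1) (Qt l) hsup
    simp only [pow_one] at this
    exact this
  have hpowk : (fun h : Fin d → ℝ => ‖h‖ ^ k) =O[nhds 0] fun h => ‖h‖ := by
    rw [isBigO_iff]
    refine ⟨1, ?_⟩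
    filter_upwards [Metric.closedBall_mem_nhds (0 : Fin d → ℝ) one_pos] with h hh
    rw [Metric.mem_closedBall, dist_zero_right] at hh
    have : ‖h‖ ^ k ≤ ‖h‖ ^ 1 := pow_le_pow_of_le_one (norm_nonneg h) hh hk
    simpa [abs_of_nonneg (pow_nonneg (norm_nonneg h) k)] using this
  set u : (Fin d → ℝ) → (Fin n → ℝ) := fun h => f (x + h) - f x with hu
  have hu_eq : ∀ h, u h = q h + (f (x + h) - polyEval Q h) := by
    intro h; rw [hq_eq]
    show f (x + h) - f x = polyEval Q h - f x + (f (x + h) - polyEval Q h)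
    abel
  have hu1 : u =O[nhds 0] fun h => ‖h‖ :=
    (hq1.add (hQ.trans hpowk)).congr_left fun h => (hu_eq h).symm
  have hu0 : Tendsto u (nhds 0) (nhds 0) := hu1.trans_tendsto tendsto_norm_zero
  have hq0' : Tendsto q (nhds 0) (nhds 0) := hq1.trans_tendsto tendsto_norm_zero
  -- Term A
  have hA : (fun h => g (f x + u h) - polyEval P (u h)) =O[nhds 0] fun h => ‖h‖ ^ k :=
    (hP.comp_tendsto hu0).trans (hu1.norm_left.pow k)
  -- Term B
  have hF : ContDiff ℝ 1 (fun v : Fin n → ℝ => polyEval P v) := by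
    rw [contDiff_pi]
    exact fun i => contDiff_mvPolyEval (P i)
  obtain ⟨K, t, ht, hlip⟩ :=
    (hF.contDiffAt : ContDiffAt ℝ 1 _ (0 : Fin n → ℝ)).exists_lipschitzOnWith
  have hB : (fun h => polyEval P (u h) - polyEval P (q h)) =O[nhds 0] fun h => ‖h‖ ^ k := by
    have hmemu : ∀ᶠ h in nhds (0 : Fin d → ℝ), u h ∈ t :=
      hu0.eventually (eventually_of_mem ht fun _ hy => hy)
    have hmemq : ∀ᶠ h in nhds (0 : Fin d → ℝ), q h ∈ t :=
      hq0'.eventually (eventually_of_mem ht fun _ hy => hy)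
    have h1 : (fun h => polyEval P (u h) - polyEval P (q h)) =O[nhds 0]
        fun h => f (x + h) - polyEval Q h := by
      refine IsBigO.of_bound K ?_
      filter_upwards [hmemu, hmemq] with h h1 h2
      have hd := hlip.dist_le_mul (u h) h1 (q h) h2
      rw [dist_eq_norm, dist_eq_norm] at hd
      have he : u h - q h = f (x + h) - polyEval Q h := by
        rw [hu_eq h]; abel
      rw [he] at hd
      exact hd
    exact h1.trans hQ
  -- Term C
  have hC : (fun h => polyEval S h - polyEval Tp h) =O[nhds 0] fun h => ‖h‖ ^ k := by
    rw [isBigO_pi]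
    intro i
    have heq : ∀ h : Fin d → ℝ,
        MvPolynomial.eval h (S i - Tp i) = polyEval S h i - polyEval Tp h i := by
      intro h; simp [polyEval]
    have hsupp : ∀ a ∈ (S i - Tp i).support, k ≤ a.sum fun _ e => e := by
      intro a ha
      by_contra hlt
      push_neg at hlt
      apply MvPolynomial.mem_support_iff.mp ha
      rw [MvPolynomial.coeff_sub]
      have hT : MvPolynomial.coeff a (Tp i) = MvPolynomial.coeff a (S i) := by
        rw [hTp]
        rw [MvPolynomial.coeff_sum]
        have hdeg : (∑ j ∈ a.support, a j) < k := hlt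
        simp only [MvPolynomial.coeff_homogeneousComponent]
        rw [Finset.sum_ite_eq (Finset.range k) a.degree
          (fun _ => MvPolynomial.coeff a (S i))]
        rw [if_pos (Finset.mem_range.mpr (show a.degree < k from hdeg))]
      rw [hT, sub_self]
    exact (eval_isBigO_of_support (S i - Tp i) hsupp).congr_left fun h => heq h
  -- composition identity
  have hcomp : ∀ h, polyEval P (q h) = polyEval S h := by
    intro h; funext i
    have h2 := MvPolynomial.comp_aeval_apply
      (MvPolynomial.aeval h : MvPolynomial (Fin d) ℝ →ₐ[ℝ] ℝ) (P i) (f := Qt)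
    have h3 : ∀ {d' : ℕ} (v : Fin d' → ℝ) (p : MvPolynomial (Fin d') ℝ),
        MvPolynomial.aeval v p = MvPolynomial.eval v p := fun _ _ => rfl
    show (MvPolynomial.aeval fun l => (MvPolynomial.aeval h) (Qt l)) (P i)
      = (MvPolynomial.aeval h) ((MvPolynomial.aeval Qt) (P i))
    exact h2.symm
  have hfinal : ∀ h, (g ∘ f) (x + h) - polyEval Tp h =
      (g (f x + u h) - polyEval P (u h)) + ((polyEval P (u h) - polyEval P (q h))
      + (polyEval S h - polyEval Tp h)) := by
    intro h
    have hfu : f x + u h = f (x + h) := by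
      show f x + (f (x + h) - f x) = f (x + h); abel
    rw [← hcomp h, Function.comp_apply, ← hfu]
    abel
  exact (hA.add (hB.add hC)).congr_left fun h => (hfinal h).symm
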